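/- Let (X,d) be a compact metric space with a fixed reference probability measure m, and assume (X,d,m) is regular: every coupling γ between m and any ν ∈ P(X) achieving the infimum defining W₂(m,ν) is of the form γ = (Id,T)_# m for some measurable map T : X → X. Let μ ∈ P(X) and let B(μ) be the unique minimizer of ν ↦ W₂(ν,m) among all ν ∈ P(X) with supp ν ⊆ b(μ). Then supp(m) ∩ b(μ) ⊆ supp B(μ). -/

import Mathlib

open MeasureTheory Filter

section Defs

variable {X : Type*} [MetricSpace X] [MeasurableSpace X]

/-- The set of metric barycenters of `μ`: the minimizers over `y ∈ X` of
`y ↦ ∫ d(x,y)² dμ(x)`. -/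
def bary (μ : ProbabilityMeasure X) : Set X :=
  {y : X | ∀ z : X,
    ∫ x, dist x y ^ 2 ∂(μ : Measure X) ≤ ∫ x, dist x z ^ 2 ∂(μ : Measure X)}

/-- `γ` is a coupling of `μ` and `ν`: a measure on `X × X` with marginals `μ` and `ν`. -/
def IsCoupling (γ : Measure (X × X)) (μ ν : ProbabilityMeasure X) : Prop :=
  γ.map Prod.fst = (μ : Measure X) ∧ γ.map Prod.snd = (ν : Measure X)

/-- The squared 2-Wasserstein distance `W₂(μ,ν)²`. -/
noncomputable def W2sq (μ ν : ProbabilityMeasure X) : ℝ :=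
  sInf {c : ℝ | ∃ γ : Measure (X × X), IsCoupling γ μ ν ∧
    c = ∫ p, dist p.1 p.2 ^ 2 ∂γ}

/-- The 2-Wasserstein distance `W₂(μ,ν)`. -/
noncomputable def W2 (μ ν : ProbabilityMeasure X) : ℝ := Real.sqrt (W2sq μ ν)

/-- The support of a probability measure: the set of points all of whose open
neighbourhoods have positive measure. -/
def mSupport (μ : ProbabilityMeasure X) : Set X :=
  {x : X | ∀ U : Set X, IsOpen U → x ∈ U → (μ : Measure X) U ≠ 0}

/-- `(X,d,m)` is regular: every coupling between `m` and any `ν ∈ P(X)` achieving the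
infimum defining `W₂(m,ν)` is of the form `(Id,T)_# m` for some measurable map `T`. -/
def Regular (m : ProbabilityMeasure X) : Prop :=
  ∀ ν : ProbabilityMeasure X, ∀ γ : Measure (X × X), IsCoupling γ m ν →
    (∫ p, dist p.1 p.2 ^ 2 ∂γ) = W2sq m ν →
    ∃ T : X → X, Measurable T ∧ γ = (m : Measure X).map (fun x => (x, T x))

/-- The variance of `μ`: the minimal value of `y ↦ ∫ d(x,y)² dμ(x)`. -/
noncomputable def mvar (μ : ProbabilityMeasure X) : ℝ :=
  ⨅ y : X, ∫ x, dist x y ^ 2 ∂(μ : Measure X)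

end Defs

section Aux

open Set

variable {X : Type*} [MetricSpace X] [CompactSpace X] [MeasurableSpace X] [BorelSpace X]

lemma integrable_of_cont {Y : Type*} [MetricSpace Y] [CompactSpace Y] [MeasurableSpace Y]
    [OpensMeasurableSpace Y] (f : Y → ℝ) (hf : Continuous f) (μ : Measure Y)
    [IsFiniteMeasure μ] : Integrable f μ := by
  exact (BoundedContinuousFunction.mkOfCompact ⟨f, hf⟩).integrable μ

lemma cost_integrable (γ : Measure (X × X)) [IsFiniteMeasure γ] :
    Integrable (fun p : X × X => dist p.1 p.2 ^ 2) γ :=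
  integrable_of_cont _ ((continuous_fst.dist continuous_snd).pow 2) γ

lemma coupling_prob {γ : Measure (X × X)} {μ ν : ProbabilityMeasure X}
    (h : IsCoupling γ μ ν) : IsProbabilityMeasure γ := by
  constructor
  have := congrArg (fun ρ : Measure X => ρ univ) h.1
  simp only [Measure.map_apply measurable_fst MeasurableSet.univ, Set.preimage_univ] at this
  rw [this]
  simp

lemma costSet_nonempty (μ ν : ProbabilityMeasure X) :
    {c : ℝ | ∃ γ : Measure (X × X), IsCoupling γ μ ν ∧
      c = ∫ p, dist p.1 p.2 ^ 2 ∂γ}.Nonempty := by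
  refine ⟨_, (μ : Measure X).prod (ν : Measure X), ⟨?_, ?_⟩, rfl⟩
  · rw [Measure.map_fst_prod]; simp
  · rw [Measure.map_snd_prod]; simp

lemma costSet_nonneg (μ ν : ProbabilityMeasure X) :
    ∀ c ∈ {c : ℝ | ∃ γ : Measure (X × X), IsCoupling γ μ ν ∧
      c = ∫ p, dist p.1 p.2 ^ 2 ∂γ}, 0 ≤ c := by
  rintro c ⟨γ, _, rfl⟩
  exact integral_nonneg fun p => by positivity

lemma W2sq_nonneg (μ ν : ProbabilityMeasure X) : 0 ≤ W2sq μ ν :=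
  le_csInf (costSet_nonempty μ ν) (costSet_nonneg μ ν)

lemma W2sq_le_cost {γ : Measure (X × X)} {μ ν : ProbabilityMeasure X}
    (h : IsCoupling γ μ ν) : W2sq μ ν ≤ ∫ p, dist p.1 p.2 ^ 2 ∂γ :=
  csInf_le ⟨0, costSet_nonneg μ ν⟩ ⟨γ, h, rfl⟩

lemma isClosed_mSupport (μ : ProbabilityMeasure X) : IsClosed (mSupport μ) := by
  rw [← isOpen_compl_iff]
  rw [isOpen_iff_forall_mem_open]
  intro y hy
  simp only [mSupport, Set.mem_compl_iff, Set.mem_setOf_eq, not_forall] at hy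
  obtain ⟨U, hU, hyU, h0⟩ := hy
  push_neg at h0
  refine ⟨U, fun z hz => ?_, hU, hyU⟩
  simp only [mSupport, Set.mem_compl_iff, Set.mem_setOf_eq, not_forall]
  exact ⟨U, hU, hz, by simpa using h0⟩

lemma measure_compl_mSupport (μ : ProbabilityMeasure X) :
    (μ : Measure X) (mSupport μ)ᶜ = 0 := by
  set ι := {U : Set X // IsOpen U ∧ (μ : Measure X) U = 0}
  obtain ⟨T, hTc, hTU⟩ :=
    TopologicalSpace.isOpen_iUnion_countable (fun i : ι => (i : Set X)) (fun i => i.2.1)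
  have hsub : (mSupport μ)ᶜ ⊆ ⋃ i ∈ T, (i : Set X) := by
    rw [hTU]
    intro y hy
    simp only [mSupport, Set.mem_compl_iff, Set.mem_setOf_eq, not_forall] at hy
    obtain ⟨U, hU, hyU, h0⟩ := hy
    push_neg at h0
    exact Set.mem_iUnion.mpr ⟨⟨U, hU, h0⟩, hyU⟩
  refine le_antisymm (le_trans (measure_mono hsub) (le_of_eq ?_)) zero_le
  exact (measure_biUnion_null_iff hTc).mpr fun i _ => i.2.2

lemma mSupport_nonempty (μ : ProbabilityMeasure X) : (mSupport μ).Nonempty := by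
  by_contra h
  rw [Set.not_nonempty_iff_eq_empty] at h
  have h0 := measure_compl_mSupport μ
  rw [h, Set.compl_empty] at h0
  simp at h0

end Aux

/-- If `(X,d,m)` is regular and `B(μ)` is the minimizer of `ν ↦ W₂(ν,m)` among all `ν`
with `supp ν ⊆ b(μ)`, then `supp m ∩ b(μ) ⊆ supp B(μ)`. -/
theorem support_m_inter_bary_subset
    {X : Type*} [MetricSpace X] [CompactSpace X]
    [MeasurableSpace X] [BorelSpace X]
    (m : ProbabilityMeasure X) (hreg : Regular m) (μ : ProbabilityMeasure X)
    (Bμ : ProbabilityMeasure X)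
    (hB₁ : mSupport Bμ ⊆ bary μ)
    (hB₂ : ∀ ν : ProbabilityMeasure X, mSupport ν ⊆ bary μ → W2 Bμ m ≤ W2 ν m) :
    mSupport m ∩ bary μ ⊆ mSupport Bμ := by
  rintro x ⟨hxm, hxb⟩
  by_contra hx
  -- distance from x to the support of Bμ
  set S := mSupport Bμ with hS
  have hSc : IsClosed S := isClosed_mSupport Bμ
  have hSne : S.Nonempty := mSupport_nonempty Bμ
  set δ := Metric.infDist x S with hδdef
  have hδ : 0 < δ := (hSc.notMem_iff_infDist_pos hSne).mp hx
  set ε := δ / 3 with hεdef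
  have hεpos : 0 < ε := by positivity
  set B := Metric.ball x ε with hBdef
  have hBmeas : MeasurableSet B := measurableSet_ball
  have hmB : (m : Measure X) B ≠ 0 := hxm B Metric.isOpen_ball (Metric.mem_ball_self hεpos)
  set β := ((m : Measure X) B).toReal with hβdef
  have hβ : 0 < β := ENNReal.toReal_pos hmB (measure_ne_top _ _)
  set κ := ((δ - ε) ^ 2 - ε ^ 2) * β with hκdef
  have hεδ : ε < δ - ε := by rw [hεdef]; linarith
  have hκ : 0 < κ := by
    refine mul_pos ?_ hβ
    have h1 : 0 < δ - ε := lt_trans hεpos hεδ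
    nlinarith
  -- a near-optimal coupling of Bμ and m
  obtain ⟨c, hcmem, hclt⟩ := Real.lt_sInf_add_pos (costSet_nonempty Bμ m) hκ
  obtain ⟨γ, hγ, rfl⟩ := hcmem
  haveI : IsProbabilityMeasure γ := coupling_prob hγ
  set f : X × X → ℝ := fun p => dist p.1 p.2 ^ 2 with hfdef
  have hint : Integrable f γ := cost_integrable γ
  set sB : Set (X × X) := Prod.snd ⁻¹' B with hsBdef
  have msB : MeasurableSet sB := measurable_snd hBmeas
  have hγsB : γ sB = (m : Measure X) B := by
    rw [← hγ.2, Measure.map_apply measurable_snd hBmeas]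
  -- almost every point of γ has first coordinate in S
  have hae : ∀ᵐ p ∂γ, p.1 ∈ S := by
    have h0 : γ (Prod.fst ⁻¹' Sᶜ) = 0 := by
      rw [← Measure.map_apply measurable_fst hSc.measurableSet.compl, hγ.1]
      exact measure_compl_mSupport Bμ
    have heq : {p : X × X | ¬ p.1 ∈ S} = Prod.fst ⁻¹' Sᶜ := rfl
    exact ae_iff.mpr (by rw [heq]; exact h0)
  -- lower bound for the cost of γ on sB
  have hlow : (δ - ε) ^ 2 * β ≤ ∫ p in sB, f p ∂γ := by
    have hbound : ∀ᵐ p ∂(γ.restrict sB), (δ - ε) ^ 2 ≤ f p := by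
      filter_upwards [ae_restrict_mem msB, ae_restrict_of_ae hae] with p hp2 hp1
      have h1 : δ ≤ dist x p.1 := Metric.infDist_le_dist_of_mem hp1
      have h2 : dist x p.2 < ε := by
        rw [dist_comm]; exact Metric.mem_ball.mp hp2
      have h3 : dist x p.1 ≤ dist x p.2 + dist p.2 p.1 := dist_triangle x p.2 p.1
      have h4 : δ - ε ≤ dist p.1 p.2 := by
        rw [dist_comm p.1 p.2]; linarith
      have h5 : 0 ≤ δ - ε := le_of_lt (lt_trans hεpos hεδ)
      simp only [hfdef]
      nlinarith [dist_nonneg (x := p.1) (y := p.2)]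
    have hconst : ∫ _ in sB, (δ - ε) ^ 2 ∂γ = (δ - ε) ^ 2 * β := by
      rw [setIntegral_const, measureReal_def, hγsB, hβdef, smul_eq_mul, mul_comm]
    rw [← hconst]
    exact integral_mono_ae (integrable_const _) hint.restrict hbound
  -- the modified coupling ρ
  set g : X → X × X := fun y => (x, y) with hgdef
  have hg : Measurable g := measurable_const.prodMk measurable_id
  set mB : Measure X := (m : Measure X).restrict B with hmBdef
  set ρ : Measure (X × X) := γ.restrict sBᶜ + mB.map g with hρdef
  haveI : IsFiniteMeasure (mB.map g) := by
    constructor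
    rw [Measure.map_apply hg MeasurableSet.univ]
    exact lt_of_le_of_lt (measure_mono (Set.subset_univ _)) (measure_lt_top _ _)
  -- second marginal of ρ is m
  have hρsnd : ρ.map Prod.snd = (m : Measure X) := by
    rw [hρdef, Measure.map_add _ _ measurable_snd]
    have h1 : (γ.restrict sBᶜ).map Prod.snd = (m : Measure X).restrict Bᶜ := by
      ext A hA
      rw [Measure.map_apply measurable_snd hA, Measure.restrict_apply (measurable_snd hA),
        Measure.restrict_apply hA]
      have : Prod.snd ⁻¹' A ∩ sBᶜ = Prod.snd ⁻¹' (A ∩ Bᶜ) := by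
        ext p; simp [hsBdef]
      rw [this, ← Measure.map_apply measurable_snd (hA.inter hBmeas.compl), hγ.2]
    have h2 : (mB.map g).map Prod.snd = (m : Measure X).restrict B := by
      rw [Measure.map_map measurable_snd hg]
      have : Prod.snd ∘ g = id := rfl
      rw [this, Measure.map_id]
    rw [h1, h2, add_comm, Measure.restrict_add_restrict_compl hBmeas]
  haveI hρprob : IsProbabilityMeasure ρ := by
    constructor
    have := congrArg (fun ν : Measure X => ν Set.univ) hρsnd
    simp only [Measure.map_apply measurable_snd MeasurableSet.univ, Set.preimage_univ] at this
    rw [this]; simp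
  -- the competitor measure
  haveI : IsProbabilityMeasure (ρ.map Prod.fst) :=
    MeasureTheory.Measure.isProbabilityMeasure_map measurable_fst.aemeasurable
  set ν' : ProbabilityMeasure X := ⟨ρ.map Prod.fst, inferInstance⟩ with hν'def
  have hcoup' : IsCoupling ρ ν' m := ⟨rfl, hρsnd⟩
  -- support of ν' is contained in bary μ
  have hsupp : mSupport ν' ⊆ bary μ := by
    intro z hz
    by_cases hzS : z ∈ S
    · exact hB₁ hzS
    by_cases hzx : z = x
    · exact hzx ▸ hxb
    exfalso
    simp only [mSupport, Set.mem_setOf_eq, hS] at hzS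
    push_neg at hzS
    obtain ⟨V₀, hV₀, hzV₀, h0⟩ := hzS
    set V := V₀ ∩ {x}ᶜ with hVdef
    have hVopen : IsOpen V := hV₀.inter isClosed_singleton.isOpen_compl
    have hzV : z ∈ V := ⟨hzV₀, by simpa using hzx⟩
    refine hz V hVopen hzV ?_
    show (ρ.map Prod.fst) V = 0
    have hVmeas : MeasurableSet V := hVopen.measurableSet
    rw [Measure.map_apply measurable_fst hVmeas, hρdef]
    simp only [Measure.add_apply]
    have hp2 : (mB.map g) (Prod.fst ⁻¹' V) = 0 := by
      rw [Measure.map_apply hg (measurable_fst hVmeas)]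
      have : g ⁻¹' (Prod.fst ⁻¹' V) = ∅ := by
        ext y
        simp only [hgdef, Set.mem_preimage, Set.mem_empty_iff_false, iff_false]
        intro hxV
        exact hxV.2 rfl
      rw [this]; simp
    have hp1 : γ.restrict sBᶜ (Prod.fst ⁻¹' V) = 0 := by
      have hγV : γ (Prod.fst ⁻¹' V) = 0 := by
        rw [← Measure.map_apply measurable_fst hVmeas, hγ.1]
        exact measure_mono_null Set.inter_subset_left h0
      refine le_antisymm (le_trans ?_ hγV.le) zero_le
      rw [Measure.restrict_apply (measurable_fst hVmeas)]
      exact measure_mono Set.inter_subset_left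
    rw [hp1, hp2]; simp
  -- cost of ρ
  have hcost2 : ∫ p, f p ∂(mB.map g) ≤ ε ^ 2 * β := by
    rw [integral_map hg.aemeasurable (f := f)
      (((continuous_fst.dist continuous_snd).pow 2).aestronglyMeasurable)]
    have hbound : ∀ᵐ y ∂mB, f (g y) ≤ ε ^ 2 := by
      rw [hmBdef]
      filter_upwards [ae_restrict_mem hBmeas] with y hy
      have : dist x y < ε := by rw [dist_comm]; exact Metric.mem_ball.mp hy
      simp only [hfdef, hgdef]
      nlinarith [dist_nonneg (x := x) (y := y)]
    have hconst : ∫ _, ε ^ 2 ∂mB = ε ^ 2 * β := by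
      rw [integral_const, measureReal_def, hmBdef, Measure.restrict_apply_univ, hβdef, smul_eq_mul, mul_comm]
    rw [← hconst]
    refine integral_mono_ae ?_ (integrable_const _) hbound
    exact integrable_of_cont _ (((continuous_const.dist continuous_id).pow 2)) mB
  have hsplit : ∫ p in sBᶜ, f p ∂γ = ∫ p, f p ∂γ - ∫ p in sB, f p ∂γ := by
    have := integral_add_compl msB hint
    linarith
  have hcostρ : ∫ p, f p ∂ρ < W2sq Bμ m := by
    rw [hρdef, integral_add_measure hint.restrict (cost_integrable _)]
    have : ∫ p, dist p.1 p.2 ^ 2 ∂γ < W2sq Bμ m + κ := hclt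
    rw [hsplit]
    have hκeq : κ = (δ - ε) ^ 2 * β - ε ^ 2 * β := by rw [hκdef]; ring
    have h1 := hlow
    have h2 := hcost2
    have h3 : (∫ p, f p ∂γ) < W2sq Bμ m + κ := this
    linarith
  -- conclude
  have hle : W2sq ν' m ≤ ∫ p, f p ∂ρ := W2sq_le_cost hcoup'
  have hlt : W2sq ν' m < W2sq Bμ m := lt_of_le_of_lt hle hcostρ
  have hW2lt : W2 ν' m < W2 Bμ m := Real.sqrt_lt_sqrt (W2sq_nonneg ν' m) hlt
  exact absurd (hB₂ ν' hsupp) (not_le.mpr hW2lt)
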